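/- For d ≥ 3 and t ∈ (0, 1/√(d-1)), the quantity ((√(d-1)+t)^d - (√(d-1)-t)^d)² / (d^d·(2(1+t²)^d - 2(1-t²)^d)) is strictly increasing in t. -/

import Mathlib

private lemma aux_sum_le (p q r w : ℝ) (hw : 0 < w) (hwr : w < r) (hrq : r < q)
    (hqp : q < p) (hm : p * w = q * r) (n : ℕ) : q ^ n + r ^ n ≤ p ^ n + w ^ n := by
  have hr : 0 < r := hw.trans hwr
  have hq : 0 < q := hr.trans hrq
  have hp : 0 < p := hq.trans hqp
  have h1 : p ^ n * w ^ n = q ^ n * r ^ n := by rw [← mul_pow, ← mul_pow, hm]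
  have h2 : q ^ n ≤ p ^ n := pow_le_pow_left₀ hq.le hqp.le n
  have h3 : r ^ n ≤ p ^ n := pow_le_pow_left₀ hr.le (hrq.trans hqp).le n
  nlinarith [pow_pos hp n, mul_nonneg (sub_nonneg.2 h2) (sub_nonneg.2 h3)]

private lemma aux_F_nonneg (p q r w : ℝ) (hw : 0 < w) (hwr : w < r) (hrq : r < q)
    (hqp : q < p) (hm : p * w = q * r) :
    ∀ n : ℕ, 0 ≤ (q - r) * (p ^ n - w ^ n) - (p - w) * (q ^ n - r ^ n) := by
  intro n
  induction n with
  | zero => simp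
  | succ m ih =>
    have hΔ : 0 ≤ p + w - q - r := by
      have := aux_sum_le p q r w hw hwr hrq hqp hm 1
      simp only [pow_one] at this; linarith
    have hpw : 0 ≤ p ^ m - w ^ m :=
      sub_nonneg.2 (pow_le_pow_left₀ hw.le (by linarith) m)
    have hA := aux_sum_le p q r w hw hwr hrq hqp hm m
    have hqr : 0 < q - r := sub_pos.2 hrq
    have h1 : 0 ≤ (q + r) * ((q - r) * (p ^ m - w ^ m) - (p - w) * (q ^ m - r ^ m)) :=
      mul_nonneg (by nlinarith) ih
    simp only [pow_succ]
    nlinarith [mul_nonneg (mul_nonneg hΔ hqr.le) hpw,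
      mul_nonneg (mul_nonneg (by linarith : (0:ℝ) ≤ p - w) hqr.le) (sub_nonneg.2 hA), h1]

private lemma aux_key (p q r w : ℝ) (hw : 0 < w) (hwr : w < r) (hrq : r < q)
    (hqp : q < p) (hm : p * w = q * r) (n : ℕ) (hn : 2 ≤ n) :
    (p - w) * (q ^ n - r ^ n) < (q - r) * (p ^ n - w ^ n) := by
  obtain ⟨m, rfl⟩ : ∃ m, n = m + 1 := ⟨n - 1, by omega⟩
  have hr : 0 < r := hw.trans hwr
  have hq : 0 < q := hr.trans hrq
  have hp : 0 < p := hq.trans hqp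
  have hΔ : 0 < p + w - q - r := by
    nlinarith [mul_pos (sub_pos.2 hqp) (sub_pos.2 (hrq.trans hqp))]
  have hpw : 0 < p ^ m - w ^ m :=
    sub_pos.2 (pow_lt_pow_left₀ (by linarith) hw.le (by omega))
  have hA := aux_sum_le p q r w hw hwr hrq hqp hm m
  have ih := aux_F_nonneg p q r w hw hwr hrq hqp hm m
  have hqr : 0 < q - r := sub_pos.2 hrq
  have h1 : 0 ≤ (q + r) * ((q - r) * (p ^ m - w ^ m) - (p - w) * (q ^ m - r ^ m)) :=
    mul_nonneg (by nlinarith) ih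
  simp only [pow_succ]
  nlinarith [mul_pos (mul_pos hΔ hqr) hpw,
    mul_nonneg (mul_nonneg (by linarith : (0:ℝ) ≤ p - w) hqr.le) (sub_nonneg.2 hA), h1]

set_option maxHeartbeats 1600000 in
theorem ratio_strict_mono (d : ℕ) (hd : 3 ≤ d) :
    StrictMonoOn
      (fun t : ℝ =>
        ((Real.sqrt ((d : ℝ) - 1) + t) ^ d - (Real.sqrt ((d : ℝ) - 1) - t) ^ d) ^ 2 /
          ((d : ℝ) ^ d * (2 * (1 + t ^ 2) ^ d - 2 * (1 - t ^ 2) ^ d)))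
      (Set.Ioo 0 (1 / Real.sqrt ((d : ℝ) - 1))) := by
  obtain ⟨m, rfl⟩ : ∃ m, d = m + 1 := ⟨d - 1, by omega⟩
  have hm2 : 2 ≤ m := by omega
  have hcast : ((m + 1 : ℕ) : ℝ) - 1 = (m : ℝ) := by push_cast; ring
  simp only [hcast]
  set s : ℝ := Real.sqrt (m : ℝ) with hsdef
  have hs2 : s ^ 2 = (m : ℝ) := Real.sq_sqrt (by positivity)
  have hmR : (2:ℝ) ≤ (m:ℝ) := by exact_mod_cast hm2
  have hs0 : 0 < s := by
    have := Real.sqrt_nonneg (m:ℝ); nlinarith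
  have hs1 : 1 < s := by nlinarith
  have h1s : 1 / s < 1 := by rw [div_lt_one hs0]; exact hs1
  set K : ℝ := ((m + 1 : ℕ) : ℝ) ^ (m + 1) with hKdef
  have hK : 0 < K := by positivity
  have hDpos : ∀ t ∈ Set.Ioo (0:ℝ) (1/s),
      0 < 2 * (1 + t ^ 2) ^ (m+1) - 2 * (1 - t ^ 2) ^ (m+1) := by
    rintro t ⟨ht0, ht1⟩
    have htl1 : t < 1 := ht1.trans h1s
    have h1 : (1 - t^2) < (1 + t^2) := by nlinarith
    have h2 : (0:ℝ) ≤ 1 - t^2 := by nlinarith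
    have := pow_lt_pow_left₀ (n := m+1) h1 h2 (by omega)
    linarith
  have hNpos : ∀ t ∈ Set.Ioo (0:ℝ) (1/s),
      0 < (s + t) ^ (m+1) - (s - t) ^ (m+1) := by
    rintro t ⟨ht0, ht1⟩
    have hts : t < s := (ht1.trans h1s).trans hs1
    have h1 : s - t < s + t := by linarith
    have h2 : (0:ℝ) ≤ s - t := by linarith
    have := pow_lt_pow_left₀ (n := m+1) h1 h2 (by omega)
    linarith
  apply strictMonoOn_of_deriv_pos (convex_Ioo _ _)
  · apply ContinuousOn.div
    · fun_prop
    · fun_prop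
    · intro t ht
      exact ne_of_gt (mul_pos hK (hDpos t ht))
  · intro t ht
    rw [interior_Ioo] at ht
    obtain ⟨ht0, ht1⟩ := ht
    have hts1 : t * s < 1 := (lt_div_iff₀ hs0).mp ht1
    have htl1 : t < 1 := ht1.trans h1s
    have htS : t < s := htl1.trans hs1
    have hBpos : 0 < s - t := by linarith
    have hDt := hDpos t ⟨ht0, ht1⟩
    have hNt := hNpos t ⟨ht0, ht1⟩
    -- derivatives
    have hA' : HasDerivAt (fun u : ℝ => s + u) 1 t := (hasDerivAt_id t).const_add s
    have hB' : HasDerivAt (fun u : ℝ => s - u) (-1) t := (hasDerivAt_id t).const_sub s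
    have hsq : HasDerivAt (fun u : ℝ => u ^ 2) (2 * t) t := by
      simpa using hasDerivAt_pow 2 t
    have hC' : HasDerivAt (fun u : ℝ => 1 + u ^ 2) (2 * t) t := hsq.const_add 1
    have hE' : HasDerivAt (fun u : ℝ => 1 - u ^ 2) (-(2 * t)) t := hsq.const_sub 1
    have hN1 : HasDerivAt (fun u : ℝ => (s + u) ^ (m+1) - (s - u) ^ (m+1))
        (((m:ℝ)+1) * ((s + t) ^ m + (s - t) ^ m)) t := by
      have h := (hA'.fun_pow (m+1)).sub (hB'.fun_pow (m+1))
      refine h.congr_deriv ?_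
      simp [Nat.add_sub_cancel]
      -- push_cast
      ring
    have hNum : HasDerivAt (fun u : ℝ => ((s + u) ^ (m+1) - (s - u) ^ (m+1)) ^ 2)
        (2 * ((s + t) ^ (m+1) - (s - t) ^ (m+1)) * (((m:ℝ)+1) * ((s + t) ^ m + (s - t) ^ m))) t := by
      have h := hN1.fun_pow 2
      refine h.congr_deriv ?_
      norm_num
    have hD1 : HasDerivAt (fun u : ℝ => 2 * (1 + u ^ 2) ^ (m+1) - 2 * (1 - u ^ 2) ^ (m+1))
        (4 * ((m:ℝ)+1) * t * ((1 + t ^ 2) ^ m + (1 - t ^ 2) ^ m)) t := by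
      have h := ((hC'.fun_pow (m+1)).const_mul 2).sub ((hE'.fun_pow (m+1)).const_mul 2)
      refine h.congr_deriv ?_
      simp [Nat.add_sub_cancel]
      -- push_cast
      ring
    have hDen : HasDerivAt (fun u : ℝ => K * (2 * (1 + u ^ 2) ^ (m+1) - 2 * (1 - u ^ 2) ^ (m+1)))
        (K * (4 * ((m:ℝ)+1) * t * ((1 + t ^ 2) ^ m + (1 - t ^ 2) ^ m))) t := hD1.const_mul K
    have hne : K * (2 * (1 + t ^ 2) ^ (m+1) - 2 * (1 - t ^ 2) ^ (m+1)) ≠ 0 :=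
      ne_of_gt (mul_pos hK hDt)
    have hf := hNum.div hDen hne
    refine lt_of_lt_of_eq ?_ hf.deriv.symm
    apply div_pos
    · -- numerator positive
      have hw0 : 0 < (s - t) * (1 - t ^ 2) := mul_pos hBpos (by nlinarith)
      have hwr : (s - t) * (1 - t ^ 2) < (s - t) * (1 + t ^ 2) := by
        nlinarith [mul_pos hBpos (mul_pos ht0 ht0)]
      have hrq : (s - t) * (1 + t ^ 2) < (s + t) * (1 - t ^ 2) := by
        nlinarith [mul_pos ht0 (by linarith : (0:ℝ) < 1 - t * s)]
      have hqp : (s + t) * (1 - t ^ 2) < (s + t) * (1 + t ^ 2) := by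
        nlinarith [mul_pos (by linarith : (0:ℝ) < s + t) (mul_pos ht0 ht0)]
      have hmul : ((s + t) * (1 + t ^ 2)) * ((s - t) * (1 - t ^ 2)) =
          ((s + t) * (1 - t ^ 2)) * ((s - t) * (1 + t ^ 2)) := by ring
      have hkey := aux_key ((s + t) * (1 + t ^ 2)) ((s + t) * (1 - t ^ 2))
        ((s - t) * (1 + t ^ 2)) ((s - t) * (1 - t ^ 2)) hw0 hwr hrq hqp hmul m (by omega)
      have hkey' : 0 < ((s + t) * (1 - t ^ 2) - (s - t) * (1 + t ^ 2)) *
            (((s + t) * (1 + t ^ 2)) ^ m - ((s - t) * (1 - t ^ 2)) ^ m) -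
          ((s + t) * (1 + t ^ 2) - (s - t) * (1 - t ^ 2)) *
            (((s + t) * (1 - t ^ 2)) ^ m - ((s - t) * (1 + t ^ 2)) ^ m) := by
        linarith
      have hiden : 2 * t *
          (2 * ((s + t) ^ (m+1) - (s - t) ^ (m+1)) * (((m:ℝ)+1) * ((s + t) ^ m + (s - t) ^ m)) *
              (K * (2 * (1 + t ^ 2) ^ (m+1) - 2 * (1 - t ^ 2) ^ (m+1))) -
            ((s + t) ^ (m+1) - (s - t) ^ (m+1)) ^ 2 *
              (K * (4 * ((m:ℝ)+1) * t * ((1 + t ^ 2) ^ m + (1 - t ^ 2) ^ m)))) =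
          K * ((s + t) ^ (m+1) - (s - t) ^ (m+1)) * (4 * ((m:ℝ)+1)) *
            (((s + t) * (1 - t ^ 2) - (s - t) * (1 + t ^ 2)) *
              (((s + t) * (1 + t ^ 2)) ^ m - ((s - t) * (1 - t ^ 2)) ^ m) -
            ((s + t) * (1 + t ^ 2) - (s - t) * (1 - t ^ 2)) *
              (((s + t) * (1 - t ^ 2)) ^ m - ((s - t) * (1 + t ^ 2)) ^ m)) := by
        simp only [mul_pow]
        ring
      have hRHS : 0 < K * ((s + t) ^ (m+1) - (s - t) ^ (m+1)) * (4 * ((m:ℝ)+1)) *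
            (((s + t) * (1 - t ^ 2) - (s - t) * (1 + t ^ 2)) *
              (((s + t) * (1 + t ^ 2)) ^ m - ((s - t) * (1 - t ^ 2)) ^ m) -
            ((s + t) * (1 + t ^ 2) - (s - t) * (1 - t ^ 2)) *
              (((s + t) * (1 - t ^ 2)) ^ m - ((s - t) * (1 + t ^ 2)) ^ m)) :=
        mul_pos (mul_pos (mul_pos hK hNt) (by positivity)) hkey'
      nlinarith [hiden, hRHS, ht0]
    · exact pow_pos (mul_pos hK hDt) 2
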